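/- Let f : S → ℝ and let f̃ : Ω → ℝ be a first-order Closest Point-like extension of f, i.e. f̃ is C¹ with f̃|_S = f and ∇f̃(x)·∇g(x) = 0 for all x ∈ S. Let F : Ω → ℝ be any C¹ function with F|_S = f. Then for every x ∈ S, ∇f̃(x) is the orthogonal projection of ∇F(x) onto the tangent hyperplane T_xS = {v ∈ ℝ^m : v·∇g(x) = 0}. In particular, ∇f̃(x) ∈ T_xS, and ∇f̃|_S is independent of the chosen first-order Closest Point-like extension of f; it equals the intrinsic surface gradient ∇_S f. -/

import Mathlib

open scoped BigOperators RealInnerProductSpace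

open InnerProductSpace

/-- Key lemma: if `h` is `C¹` on the open set `Ω` and vanishes on the zero level set of `g`,
and `x` is a point of that level set where `∇g x ≠ 0`, then `⟪∇h x, v⟫ = 0` for every
vector `v` orthogonal to `∇g x`. Proved via the implicit function theorem. -/
lemma grad_vanish_on_tangent
    (m : ℕ) (Ω : Set (EuclideanSpace ℝ (Fin m))) (hΩ : IsOpen Ω)
    (g : EuclideanSpace ℝ (Fin m) → ℝ) (hg : ContDiffOn ℝ 1 g Ω)
    (h : EuclideanSpace ℝ (Fin m) → ℝ) (hh : ContDiffOn ℝ 1 h Ω)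
    (hzero : ∀ y ∈ Ω, g y = 0 → h y = 0)
    (x : EuclideanSpace ℝ (Fin m)) (hx : x ∈ Ω) (hgx : g x = 0)
    (hgradx : gradient g x ≠ 0)
    (v : EuclideanSpace ℝ (Fin m)) (hv : ⟪gradient g x, v⟫ = (0 : ℝ)) :
    ⟪gradient h x, v⟫ = (0 : ℝ) := by
  have hxΩ : Ω ∈ nhds x := hΩ.mem_nhds hx
  have hgdiff : DifferentiableAt ℝ g x :=
    ((hg.contDiffAt hxΩ).differentiableAt one_ne_zero)
  have hhdiff : DifferentiableAt ℝ h x :=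
    ((hh.contDiffAt hxΩ).differentiableAt one_ne_zero)
  -- the full Fréchet derivatives as `toDual` of gradients
  have hgF : HasFDerivAt g ((toDual ℝ (EuclideanSpace ℝ (Fin m))) (gradient g x) :
      EuclideanSpace ℝ (Fin m) →L[ℝ] ℝ) x :=
    hasGradientAt_iff_hasFDerivAt.1 hgdiff.hasGradientAt
  have hhF : HasFDerivAt h ((toDual ℝ (EuclideanSpace ℝ (Fin m))) (gradient h x) :
      EuclideanSpace ℝ (Fin m) →L[ℝ] ℝ) x :=
    hasGradientAt_iff_hasFDerivAt.1 hhdiff.hasGradientAt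
  set f' : EuclideanSpace ℝ (Fin m) →L[ℝ] ℝ :=
    (toDual ℝ (EuclideanSpace ℝ (Fin m))) (gradient g x) with hf'
  have hf'apply : ∀ w, f' w = ⟪gradient g x, w⟫ := fun w => rfl
  -- strict differentiability
  have hgS : HasStrictFDerivAt g f' x := by
    have := (hg.contDiffAt hxΩ).hasStrictFDerivAt one_ne_zero
    have huniq : fderiv ℝ g x = f' := hgF.fderiv
    rwa [huniq] at this
  -- surjectivity of `f'`
  have hsurj : f'.range = ⊤ := by
    rw [LinearMap.range_eq_top]
    intro c
    have hne : f' (gradient g x) ≠ 0 := by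
      rw [hf'apply]
      exact fun hc => hgradx (inner_self_eq_zero.1 hc)
    refine ⟨(c / f' (gradient g x)) • gradient g x, ?_⟩
    simp [map_smul, div_mul_cancel₀, hne]
  -- the implicit function
  set ψ : f'.ker → EuclideanSpace ℝ (Fin m) :=
    hgS.implicitFunction g f' hsurj (g x) with hψdef
  have hψ0 : ψ 0 = x := hgS.implicitFunction_apply_image hsurj
  have hψS : HasStrictFDerivAt ψ (f'.ker).subtypeL 0 :=
    hgS.to_implicitFunction hsurj
  -- eventually `g (ψ y) = 0`
  have hmap := hgS.map_implicitFunction_eq hsurj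
  have htend : Filter.Tendsto (fun y : f'.ker => ((g x : ℝ), y))
      (nhds 0) (nhds (g x, (0 : f'.ker))) :=
    Filter.Tendsto.prodMk_nhds tendsto_const_nhds Filter.tendsto_id
  have hev1 : ∀ᶠ y in nhds (0 : f'.ker), g (ψ y) = 0 := by
    filter_upwards [htend.eventually hmap] with y hy
    simpa [hψdef, hgx] using hy
  -- eventually `ψ y ∈ Ω`
  have hev2 : ∀ᶠ y in nhds (0 : f'.ker), ψ y ∈ Ω := by
    have hcont : Filter.Tendsto ψ (nhds 0) (nhds x) := by
      have := hψS.continuousAt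
      rwa [ContinuousAt, hψ0] at this
    exact hcont hxΩ
  -- so `h ∘ ψ` vanishes near `0`
  have hev : ∀ᶠ y in nhds (0 : f'.ker), h (ψ y) = 0 := by
    filter_upwards [hev1, hev2] with y h1 h2
    exact hzero _ h2 h1
  -- derivative of `h ∘ ψ` at `0`
  have hcomp : HasFDerivAt (h ∘ ψ)
      (((toDual ℝ (EuclideanSpace ℝ (Fin m))) (gradient h x)).comp
        (f'.ker).subtypeL) 0 := by
    have hhF' : HasFDerivAt h ((toDual ℝ (EuclideanSpace ℝ (Fin m))) (gradient h x) :
        EuclideanSpace ℝ (Fin m) →L[ℝ] ℝ) (ψ 0) := by rw [hψ0]; exact hhF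
    exact hhF'.comp 0 hψS.hasFDerivAt
  have hzeroD : HasFDerivAt (h ∘ ψ) (0 : f'.ker →L[ℝ] ℝ) 0 := by
    have hconst : HasFDerivAt (fun _ : f'.ker => (0 : ℝ))
        (0 : f'.ker →L[ℝ] ℝ) 0 := hasFDerivAt_const 0 0
    refine hconst.congr_of_eventuallyEq ?_
    filter_upwards [hev] with y hy using hy
  have heq := hcomp.unique hzeroD
  -- apply to the tangent vector `v`
  have hvker : v ∈ f'.ker := by
    rw [LinearMap.mem_ker]; rw [ContinuousLinearMap.coe_coe, hf'apply]; exact hv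
  have := congrArg (fun L : f'.ker →L[ℝ] ℝ => L ⟨v, hvker⟩) heq
  simpa using this

/-- for a first-order Closest Point-like extension `f̃` of `f : S → ℝ`
(where `S = {g = 0}` is a `C¹` level-set hypersurface), the gradient `∇f̃(x)` at `x ∈ S`
is the orthogonal projection of `∇F(x)` onto the tangent hyperplane `(∇g(x))^⊥`, for any
`C¹` extension `F` of `f`; in particular `∇f̃(x)` is tangent and `∇f̃|_S` does not depend
on the chosen Closest Point-like extension. -/
theorem cp_like_extension_gradient_is_projection
    (m : ℕ) (Ω : Set (EuclideanSpace ℝ (Fin m))) (hΩ : IsOpen Ω)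
    (g : EuclideanSpace ℝ (Fin m) → ℝ) (hg : ContDiffOn ℝ 1 g Ω)
    (hgrad : ∀ x ∈ Ω, g x = 0 → gradient g x ≠ 0)
    (ftil : EuclideanSpace ℝ (Fin m) → ℝ) (hftil : ContDiffOn ℝ 1 ftil Ω)
    (hperp : ∀ x ∈ Ω, g x = 0 → ⟪gradient ftil x, gradient g x⟫ = (0 : ℝ))
    (F : EuclideanSpace ℝ (Fin m) → ℝ) (hF : ContDiffOn ℝ 1 F Ω)
    (hagree : ∀ x ∈ Ω, g x = 0 → ftil x = F x)
    (ftil₂ : EuclideanSpace ℝ (Fin m) → ℝ) (hftil₂ : ContDiffOn ℝ 1 ftil₂ Ω)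
    (hperp₂ : ∀ x ∈ Ω, g x = 0 → ⟪gradient ftil₂ x, gradient g x⟫ = (0 : ℝ))
    (hagree₂ : ∀ x ∈ Ω, g x = 0 → ftil x = ftil₂ x) :
    ∀ x ∈ Ω, g x = 0 →
      gradient ftil x ∈ (ℝ ∙ gradient g x)ᗮ ∧
      gradient ftil x =
        (Submodule.orthogonalProjectionOnto (ℝ ∙ gradient g x)ᗮ (gradient F x) :
          EuclideanSpace ℝ (Fin m)) ∧
      gradient ftil x = gradient ftil₂ x := by
  intro x hx hgx
  have hxΩ : Ω ∈ nhds x := hΩ.mem_nhds hx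
  -- gradient of a difference
  have gradsub : ∀ (u w : EuclideanSpace ℝ (Fin m) → ℝ), ContDiffOn ℝ 1 u Ω →
      ContDiffOn ℝ 1 w Ω →
      gradient (fun y => u y - w y) x = gradient u x - gradient w x := by
    intro u w hu hw
    have hud : DifferentiableAt ℝ u x := (hu.contDiffAt hxΩ).differentiableAt one_ne_zero
    have hwd : DifferentiableAt ℝ w x := (hw.contDiffAt hxΩ).differentiableAt one_ne_zero
    have h1 : HasFDerivAt u ((toDual ℝ (EuclideanSpace ℝ (Fin m))) (gradient u x) :
        EuclideanSpace ℝ (Fin m) →L[ℝ] ℝ) x := hasGradientAt_iff_hasFDerivAt.1 hud.hasGradientAt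
    have h2 : HasFDerivAt w ((toDual ℝ (EuclideanSpace ℝ (Fin m))) (gradient w x) :
        EuclideanSpace ℝ (Fin m) →L[ℝ] ℝ) x := hasGradientAt_iff_hasFDerivAt.1 hwd.hasGradientAt
    have h3 : HasGradientAt (fun y => u y - w y) (gradient u x - gradient w x) x := by
      rw [hasGradientAt_iff_hasFDerivAt]
      have h4 := h1.sub h2
      rw [← map_sub] at h4
      exact h4
    exact h3.gradient
  -- membership of tangent vectors
  have hmem₁ : gradient ftil x ∈ (ℝ ∙ gradient g x)ᗮ :=
    Submodule.mem_orthogonal_singleton_iff_inner_left.2 (hperp x hx hgx)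
  have hmem₂ : gradient ftil₂ x ∈ (ℝ ∙ gradient g x)ᗮ :=
    Submodule.mem_orthogonal_singleton_iff_inner_left.2 (hperp₂ x hx hgx)
  -- key lemma applied to `ftil - F`
  have keyF : ∀ v ∈ (ℝ ∙ gradient g x)ᗮ, ⟪gradient ftil x - gradient F x, v⟫ = (0 : ℝ) := by
    intro v hv
    have hv' : ⟪gradient g x, v⟫ = (0 : ℝ) :=
      Submodule.mem_orthogonal_singleton_iff_inner_right.1 hv
    have := grad_vanish_on_tangent m Ω hΩ g hg (fun y => ftil y - F y) (hftil.sub hF)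
      (fun y hy hgy => sub_eq_zero.2 (hagree y hy hgy)) x hx hgx (hgrad x hx hgx) v hv'
    rwa [gradsub ftil F hftil hF] at this
  have key₂ : ∀ v ∈ (ℝ ∙ gradient g x)ᗮ, ⟪gradient ftil x - gradient ftil₂ x, v⟫ = (0 : ℝ) := by
    intro v hv
    have hv' : ⟪gradient g x, v⟫ = (0 : ℝ) :=
      Submodule.mem_orthogonal_singleton_iff_inner_right.1 hv
    have := grad_vanish_on_tangent m Ω hΩ g hg (fun y => ftil y - ftil₂ y) (hftil.sub hftil₂)
      (fun y hy hgy => sub_eq_zero.2 (hagree₂ y hy hgy)) x hx hgx (hgrad x hx hgx) v hv'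
    rwa [gradsub ftil ftil₂ hftil hftil₂] at this
  refine ⟨hmem₁, ?_, ?_⟩
  · refine ((Submodule.starProjection_apply _ _).symm.trans
      (Submodule.eq_starProjection_of_mem_of_inner_eq_zero hmem₁ ?_)).symm
    intro w hw
    have h0 := keyF w hw
    calc ⟪gradient F x - gradient ftil x, w⟫_ℝ
        = -⟪gradient ftil x - gradient F x, w⟫_ℝ := by
          rw [← inner_neg_left, neg_sub]
      _ = 0 := by rw [h0, neg_zero]
  · have hd : gradient ftil x - gradient ftil₂ x ∈ (ℝ ∙ gradient g x)ᗮ :=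
      Submodule.sub_mem _ hmem₁ hmem₂
    have := key₂ _ hd
    rw [inner_self_eq_zero] at this
    exact sub_eq_zero.1 this
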